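/- Let M be a smooth, compact, connected manifold without boundary of dimension n ≥ 1 and let k ≥ 1. The projection p : Conf_k(M) → M, (x_1, …, x_k) ↦ x_1, is a locally trivial fibration: for every x₀ ∈ M there exist an open neighborhood U of x₀ in M and a homeomorphism φ : p^{-1}(U) → U × Conf_{k−1}(M ∖ {x₀}) such that the composite of φ with the projection onto U equals p restricted to p^{-1}(U). -/

import Mathlib

open scoped Manifold

noncomputable section FNAux

open Set Metric
open scoped NNReal

variable {E : Type*} [NormedAddCommGroup E] [NormedSpace ℝ E] [CompleteSpace E]

def fnB (c : E) (r : ℝ) (x : E) : ℝ := max 0 (1 - ‖x - c‖ / r)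

def fnS (c : E) (r : ℝ) (v x : E) : E := x + fnB c r x • (v - c)

def fnP (c : E) (r : ℝ) (v : E) : E → E := Function.invFun (fnS c r v)

variable {c : E} {r : ℝ}

omit [NormedSpace ℝ E] [CompleteSpace E] in
lemma fnB_nonneg (x : E) : 0 ≤ fnB c r x := le_max_left _ _

omit [NormedSpace ℝ E] [CompleteSpace E] in
lemma fnB_le_one (hr : 0 < r) (x : E) : fnB c r x ≤ 1 := by
  apply max_le (by norm_num)
  have : 0 ≤ ‖x - c‖ / r := div_nonneg (norm_nonneg _) hr.le
  linarith

omit [NormedSpace ℝ E] [CompleteSpace E] in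
lemma fnB_self : fnB c r c = 1 := by simp [fnB]

omit [NormedSpace ℝ E] [CompleteSpace E] in
lemma fnB_of_ge (hr : 0 < r) {x : E} (hx : r ≤ ‖x - c‖) : fnB c r x = 0 := by
  apply max_eq_left
  have : 1 ≤ ‖x - c‖ / r := (one_le_div hr).2 hx
  linarith

omit [NormedSpace ℝ E] [CompleteSpace E] in
lemma fnB_lip (hr : 0 < r) (x y : E) : |fnB c r x - fnB c r y| ≤ ‖x - y‖ / r := by
  have h1 : |fnB c r x - fnB c r y| ≤ |(1 - ‖x - c‖ / r) - (1 - ‖y - c‖ / r)| := by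
    have := abs_max_sub_max_le_abs (1 - ‖x - c‖ / r) (1 - ‖y - c‖ / r) 0
    simpa [fnB, max_comm] using this
  refine h1.trans ?_
  have h2 : (1 - ‖x - c‖ / r) - (1 - ‖y - c‖ / r) = (‖y - c‖ - ‖x - c‖) / r := by ring
  rw [h2, abs_div, abs_of_pos hr]
  gcongr
  calc |‖y - c‖ - ‖x - c‖| ≤ ‖(y - c) - (x - c)‖ := abs_norm_sub_norm_le _ _
    _ = ‖x - y‖ := by rw [← norm_neg]; congr 1; abel

lemma fnS_inj (hr : 0 < r) {v : E} (hv : ‖v - c‖ ≤ r / 2) :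
    Function.Injective (fnS c r v) := by
  intro x y h
  have h' : x + fnB c r x • (v - c) = y + fnB c r y • (v - c) := h
  have hxy : x - y = (fnB c r y - fnB c r x) • (v - c) := by
    have h2 : x - y = (x + fnB c r x • (v - c)) - (y + fnB c r x • (v - c)) := by abel
    rw [h2, h', sub_smul]; abel
  have hb : ‖x - y‖ ≤ (‖x - y‖ / r) * (r / 2) := by
    calc ‖x - y‖ = |fnB c r y - fnB c r x| * ‖v - c‖ := by
          rw [hxy, norm_smul, Real.norm_eq_abs]
      _ ≤ (‖y - x‖ / r) * (r / 2) := by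
          have hp : (0:ℝ) ≤ ‖y - x‖ / r := by positivity
          exact mul_le_mul (fnB_lip hr y x) hv (norm_nonneg _) hp
      _ = (‖x - y‖ / r) * (r / 2) := by rw [norm_sub_rev]
  have h3 : (‖x - y‖ / r) * (r / 2) = ‖x - y‖ / 2 := by
    field_simp
  have : ‖x - y‖ = 0 := by rw [h3] at hb; linarith [norm_nonneg (x - y)]
  rwa [norm_sub_eq_zero_iff] at this

set_option maxHeartbeats 1000000 in
lemma fnS_surj (hr : 0 < r) {v : E} (hv : ‖v - c‖ ≤ r / 2) :
    Function.Surjective (fnS c r v) := by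
  intro y
  have hlip : LipschitzWith (1/2 : ℝ≥0) (fun x => y - fnB c r x • (v - c)) := by
    apply LipschitzWith.of_dist_le_mul
    intro x x'
    rw [dist_eq_norm, dist_eq_norm]
    have h0 : (y - fnB c r x • (v - c)) - (y - fnB c r x' • (v - c))
        = (fnB c r x' - fnB c r x) • (v - c) := by rw [sub_smul]; abel
    rw [h0, norm_smul, Real.norm_eq_abs]
    calc |fnB c r x' - fnB c r x| * ‖v - c‖ ≤ (‖x' - x‖ / r) * (r / 2) := by
          have hp : (0:ℝ) ≤ ‖x' - x‖ / r := by positivity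
          exact mul_le_mul (fnB_lip hr x' x) hv (norm_nonneg _) hp
      _ = ((1/2 : ℝ≥0) : ℝ) * ‖x - x'‖ := by
          rw [norm_sub_rev]
          push_cast
          field_simp
  have hlt : (1/2 : ℝ≥0) < 1 := by
    have h : ((1/2:ℝ≥0):ℝ) < 1 := by norm_num
    exact_mod_cast h
  have hcontr : ContractingWith (1/2 : ℝ≥0) (fun x => y - fnB c r x • (v - c)) :=
    ⟨hlt, hlip⟩
  refine ⟨hcontr.fixedPoint _, ?_⟩
  have hfix : y - fnB c r (hcontr.fixedPoint _) • (v - c) = hcontr.fixedPoint _ :=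
    hcontr.fixedPoint_isFixedPt
  rw [sub_eq_iff_eq_add] at hfix
  show hcontr.fixedPoint _ + fnB c r (hcontr.fixedPoint _) • (v - c) = y
  exact hfix.symm

lemma fnP_right (hr : 0 < r) {v : E} (hv : ‖v - c‖ ≤ r / 2) (y : E) :
    fnS c r v (fnP c r v y) = y :=
  Function.rightInverse_invFun (fnS_surj hr hv) y

lemma fnP_left (hr : 0 < r) {v : E} (hv : ‖v - c‖ ≤ r / 2) (x : E) :
    fnP c r v (fnS c r v x) = x :=
  Function.leftInverse_invFun (fnS_inj hr hv) x


omit [NormedSpace ℝ E] [CompleteSpace E] in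
lemma fnB_eq_of_lt (hr : 0 < r) {x : E} (hx : ‖x - c‖ < r) :
    fnB c r x = 1 - ‖x - c‖ / r := by
  apply max_eq_right
  have : ‖x - c‖ / r < 1 := (div_lt_one hr).2 hx
  linarith

omit [CompleteSpace E] in
lemma fnS_self (v : E) : fnS c r v c = v := by
  simp [fnS, fnB_self]

lemma fnP_self (hr : 0 < r) {v : E} (hv : ‖v - c‖ ≤ r / 2) : fnP c r v v = c := by
  have h := fnP_left hr hv c
  rwa [fnS_self] at h

omit [CompleteSpace E] in
lemma fnS_of_ge (hr : 0 < r) {x : E} (v : E) (hx : r ≤ ‖x - c‖) : fnS c r v x = x := by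
  simp [fnS, fnB_of_ge hr hx]

lemma fnP_of_ge (hr : 0 < r) {v y : E} (hv : ‖v - c‖ ≤ r / 2) (hy : r ≤ ‖y - c‖) :
    fnP c r v y = y := by
  have h := fnP_left hr hv y
  rwa [fnS_of_ge hr v hy] at h

omit [CompleteSpace E] in
lemma fnS_lt (hr : 0 < r) {v x : E} (hv : ‖v - c‖ ≤ r / 2) (hx : ‖x - c‖ < r) :
    ‖fnS c r v x - c‖ < r := by
  have h1 : fnS c r v x - c = (x - c) + fnB c r x • (v - c) := by
    unfold fnS; abel
  have h2 : ‖fnS c r v x - c‖ ≤ ‖x - c‖ + fnB c r x * ‖v - c‖ := by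
    rw [h1]
    refine (norm_add_le _ _).trans ?_
    rw [norm_smul, Real.norm_eq_abs, abs_of_nonneg (fnB_nonneg x)]
  rw [fnB_eq_of_lt hr hx] at h2
  have h3 : 0 ≤ 1 - ‖x - c‖ / r := by
    have : ‖x - c‖ / r < 1 := (div_lt_one hr).2 hx
    linarith
  have h4 : (1 - ‖x - c‖ / r) * ‖v - c‖ ≤ (1 - ‖x - c‖ / r) * (r / 2) :=
    mul_le_mul_of_nonneg_left hv h3
  have h5 : (1 - ‖x - c‖ / r) * (r / 2) = r / 2 - ‖x - c‖ / 2 := by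
    field_simp
  nlinarith [norm_nonneg (x - c)]

lemma fnP_lt (hr : 0 < r) {v y : E} (hv : ‖v - c‖ ≤ r / 2) (hy : ‖y - c‖ < r) :
    ‖fnP c r v y - c‖ < r := by
  by_contra h
  push_neg at h
  have h2 := fnP_right hr hv y
  rw [fnS_of_ge hr v h] at h2
  rw [h2] at h
  linarith

lemma fnP_lipOn (hr : 0 < r) :
    LipschitzOnWith 4 (fun p : E × E => fnP c r p.1 p.2)
      (closedBall c (r / 2) ×ˢ (univ : Set E)) := by
  rw [lipschitzOnWith_iff_dist_le_mul]
  rintro ⟨v, y⟩ ⟨hv, -⟩ ⟨v', y'⟩ ⟨hv', -⟩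
  rw [mem_closedBall, dist_eq_norm] at hv hv'
  set x := fnP c r v y with hxdef
  set x' := fnP c r v' y' with hxdef'
  have e : x + fnB c r x • (v - c) = y := fnP_right hr hv y
  have e' : x' + fnB c r x' • (v' - c) = y' := fnP_right hr hv' y'
  have hdiff : x - x' = (y - y') - (fnB c r x • (v - c) - fnB c r x' • (v' - c)) := by
    rw [← e, ← e']; abel
  have hsplit : fnB c r x • (v - c) - fnB c r x' • (v' - c)
      = fnB c r x • (v - v') + (fnB c r x - fnB c r x') • (v' - c) := by
    module
  have hb1 : ‖fnB c r x • (v - v')‖ ≤ ‖v - v'‖ := by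
    rw [norm_smul, Real.norm_eq_abs, abs_of_nonneg (fnB_nonneg x)]
    have := fnB_le_one hr (c := c) x
    nlinarith [norm_nonneg (v - v')]
  have hb2 : ‖(fnB c r x - fnB c r x') • (v' - c)‖ ≤ (‖x - x'‖ / r) * (r / 2) := by
    rw [norm_smul, Real.norm_eq_abs]
    have hp : (0:ℝ) ≤ ‖x - x'‖ / r := by positivity
    exact mul_le_mul (fnB_lip hr x x') hv' (norm_nonneg _) hp
  have key : ‖x - x'‖ ≤ ‖y - y'‖ + ‖v - v'‖ + ‖x - x'‖ / 2 := by
    have h6 : ‖x - x'‖ ≤ ‖y - y'‖ + ‖fnB c r x • (v - c) - fnB c r x' • (v' - c)‖ := by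
      rw [hdiff]; exact norm_sub_le _ _
    have h7 : ‖fnB c r x • (v - c) - fnB c r x' • (v' - c)‖ ≤ ‖v - v'‖ + ‖x - x'‖ / 2 := by
      rw [hsplit]
      refine (norm_add_le _ _).trans ?_
      have h8 : (‖x - x'‖ / r) * (r / 2) = ‖x - x'‖ / 2 := by field_simp
      linarith [hb2.trans_eq h8]
    linarith
  have hfin : ‖x - x'‖ ≤ 2 * ‖y - y'‖ + 2 * ‖v - v'‖ := by linarith
  rw [dist_eq_norm, Prod.dist_eq]
  have hd1 : ‖v - v'‖ ≤ max (dist v v') (dist y y') := by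
    rw [← dist_eq_norm]; exact le_max_left _ _
  have hd2 : ‖y - y'‖ ≤ max (dist v v') (dist y y') := by
    rw [← dist_eq_norm]; exact le_max_right _ _
  have : ((4:ℝ≥0):ℝ) = 4 := by norm_num
  rw [this]
  calc ‖x - x'‖ ≤ 2 * ‖y - y'‖ + 2 * ‖v - v'‖ := hfin
    _ ≤ 4 * max (dist v v') (dist y y') := by linarith

lemma fnP_contOn (hr : 0 < r) :
    ContinuousOn (fun p : E × E => fnP c r p.1 p.2)
      (closedBall c (r / 2) ×ˢ (univ : Set E)) :=
  (fnP_lipOn hr).continuousOn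

omit [CompleteSpace E] in
lemma fnS_cont : Continuous (fun p : E × E => fnS c r p.1 p.2) := by
  unfold fnS fnB
  fun_prop

end FNAux

open Set Metric
open scoped NNReal Classical

noncomputable section FNT

variable {E : Type*} [NormedAddCommGroup E] [NormedSpace ℝ E] [CompleteSpace E]
variable {M : Type*} [TopologicalSpace M] [T2Space M]

def fnT (ch : OpenPartialHomeomorph M E) (c : E) (r : ℝ) : E × M → M :=
  fun p => if p.2 ∈ ch.source then ch.symm (fnS c r p.1 (ch p.2)) else p.2

def fnT' (ch : OpenPartialHomeomorph M E) (c : E) (r : ℝ) : E × M → M :=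
  fun p => if p.2 ∈ ch.source then ch.symm (fnP c r p.1 (ch p.2)) else p.2

variable {ch : OpenPartialHomeomorph M E} {c : E} {r : ℝ}

/-- `fnS` maps the target into the target. -/
lemma fnS_tgt (hr : 0 < r) (hcb : closedBall c r ⊆ ch.target)
    {v : E} (hv : ‖v - c‖ ≤ r / 2) {x : E} (hx : x ∈ ch.target) :
    fnS c r v x ∈ ch.target := by
  by_cases h : ‖x - c‖ < r
  · exact hcb (by simpa [mem_closedBall, dist_eq_norm] using (fnS_lt hr hv h).le)
  · rwa [fnS_of_ge hr v (not_lt.1 h)]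

lemma fnP_tgt (hr : 0 < r) (hcb : closedBall c r ⊆ ch.target)
    {v : E} (hv : ‖v - c‖ ≤ r / 2) {x : E} (hx : x ∈ ch.target) :
    fnP c r v x ∈ ch.target := by
  by_cases h : ‖x - c‖ < r
  · exact hcb (by simpa [mem_closedBall, dist_eq_norm] using (fnP_lt hr hv h).le)
  · rwa [fnP_of_ge hr hv (not_lt.1 h)]

lemma fnT'_left (hr : 0 < r) (hcb : closedBall c r ⊆ ch.target)
    {v : E} (hv : ‖v - c‖ ≤ r / 2) (m : M) :
    fnT' ch c r (v, fnT ch c r (v, m)) = m := by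
  by_cases hm : m ∈ ch.source
  · have hx : ch m ∈ ch.target := ch.map_source hm
    have h1 : fnT ch c r (v, m) = ch.symm (fnS c r v (ch m)) := by simp only [fnT, fnT']; exact if_pos hm
    have h2 : fnS c r v (ch m) ∈ ch.target := fnS_tgt hr hcb hv hx
    have h3 : ch.symm (fnS c r v (ch m)) ∈ ch.source := ch.map_target h2
    rw [h1]; simp only [fnT']; rw [if_pos h3]
    simp only [ch.right_inv h2]
    rw [fnP_left hr hv, ch.left_inv hm]
  · have h1 : fnT ch c r (v, m) = m := by simp only [fnT, fnT']; exact if_neg hm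
    rw [h1]; simp only [fnT']; rw [if_neg hm]

lemma fnT_left (hr : 0 < r) (hcb : closedBall c r ⊆ ch.target)
    {v : E} (hv : ‖v - c‖ ≤ r / 2) (m : M) :
    fnT ch c r (v, fnT' ch c r (v, m)) = m := by
  by_cases hm : m ∈ ch.source
  · have hx : ch m ∈ ch.target := ch.map_source hm
    have h1 : fnT' ch c r (v, m) = ch.symm (fnP c r v (ch m)) := by simp only [fnT, fnT']; exact if_pos hm
    have h2 : fnP c r v (ch m) ∈ ch.target := fnP_tgt hr hcb hv hx
    have h3 : ch.symm (fnP c r v (ch m)) ∈ ch.source := ch.map_target h2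
    rw [h1]; simp only [fnT]; rw [if_pos h3]
    simp only [ch.right_inv h2]
    rw [fnP_right hr hv, ch.left_inv hm]
  · have h1 : fnT' ch c r (v, m) = m := by simp only [fnT, fnT']; exact if_neg hm
    rw [h1]; simp only [fnT]; rw [if_neg hm]

lemma fnT'_inj (hr : 0 < r) (hcb : closedBall c r ⊆ ch.target)
    {v : E} (hv : ‖v - c‖ ≤ r / 2) :
    Function.Injective (fun m => fnT' ch c r (v, m)) :=
  Function.LeftInverse.injective (g := fun m => fnT ch c r (v, m))
    (fun m => fnT_left hr hcb hv m)

lemma fnT_inj (hr : 0 < r) (hcb : closedBall c r ⊆ ch.target)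
    {v : E} (hv : ‖v - c‖ ≤ r / 2) :
    Function.Injective (fun m => fnT ch c r (v, m)) :=
  Function.LeftInverse.injective (g := fun m => fnT' ch c r (v, m))
    (fun m => fnT'_left hr hcb hv m)

/-- pushing the center: `fnT` sends `ch.symm c` to `u`. -/
lemma fnT_center (hr : 0 < r) (hcb : closedBall c r ⊆ ch.target)
    {u : M} (hu : u ∈ ch.source) (hv : ‖ch u - c‖ ≤ r / 2) :
    fnT ch c r (ch u, ch.symm c) = u := by
  have hc : c ∈ ch.target := hcb (mem_closedBall_self hr.le)
  have h1 : ch.symm c ∈ ch.source := ch.map_target hc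
  simp only [fnT]; rw [if_pos h1]
  simp only [ch.right_inv hc]
  rw [fnS_self, ch.left_inv hu]

lemma fnT'_center (hr : 0 < r) (hcb : closedBall c r ⊆ ch.target)
    {u : M} (hu : u ∈ ch.source) (hv : ‖ch u - c‖ ≤ r / 2) :
    fnT' ch c r (ch u, u) = ch.symm c := by
  simp only [fnT']; rw [if_pos hu]
  rw [fnP_self hr hv]

/-- the compact "support" set is closed -/
lemma fnK_closed [ProperSpace E] (hcb : closedBall c r ⊆ ch.target) :
    IsClosed (ch.symm '' closedBall c r) :=
  ((isCompact_closedBall c r).image_of_continuousOn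
    (ch.continuousOn_symm.mono hcb)).isClosed

lemma fnT'_contOn (hr : 0 < r) (hcb : closedBall c r ⊆ ch.target)
    [ProperSpace E] :
    ContinuousOn (fnT' ch c r) (ball c (r / 2) ×ˢ (univ : Set M)) := by
  have hKs : ch.symm '' closedBall c r ⊆ ch.source := by
    rintro _ ⟨x, hx, rfl⟩; exact ch.map_target (hcb hx)
  have hKc : IsClosed (ch.symm '' closedBall c r) := fnK_closed hcb
  have hS₁o : IsOpen (ball c (r/2) ×ˢ ch.source) := isOpen_ball.prod ch.open_source
  have hS₂o : IsOpen (ball c (r/2) ×ˢ (ch.symm '' closedBall c r)ᶜ) :=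
    isOpen_ball.prod hKc.isOpen_compl
  have hc1 : ContinuousOn (fnT' ch c r) (ball c (r/2) ×ˢ ch.source) := by
    have hg : ContinuousOn (fun p : E × M => ch.symm (fnP c r p.1 (ch p.2)))
        (ball c (r/2) ×ˢ ch.source) := by
      apply ch.continuousOn_symm.comp
      · have hin : ContinuousOn (fun p : E × M => (p.1, ch p.2))
            (ball c (r/2) ×ˢ ch.source) :=
          continuousOn_fst.prodMk (ch.continuousOn.comp continuousOn_snd
            (fun p hp => hp.2))
        have hmaps : MapsTo (fun p : E × M => (p.1, ch p.2))
            (ball c (r/2) ×ˢ ch.source) (closedBall c (r/2) ×ˢ (univ : Set E)) := by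
          rintro ⟨v, m⟩ ⟨hv, hm⟩
          exact ⟨ball_subset_closedBall hv, mem_univ _⟩
        exact (fnP_contOn hr).comp hin hmaps
      · rintro ⟨v, m⟩ ⟨hv, hm⟩
        have hvv : ‖v - c‖ ≤ r/2 := by
          rw [← dist_eq_norm]; exact (mem_ball.1 hv).le
        exact fnP_tgt hr hcb hvv (ch.map_source hm)
    apply hg.congr
    rintro ⟨v, m⟩ ⟨hv, hm⟩
    simp only [fnT']; rw [if_pos hm]
  have hc2 : ContinuousOn (fnT' ch c r)
      (ball c (r/2) ×ˢ (ch.symm '' closedBall c r)ᶜ) := by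
    apply continuous_snd.continuousOn.congr
    rintro ⟨v, m⟩ ⟨hv, hm⟩
    by_cases hms : m ∈ ch.source
    · have hnot : ch m ∉ closedBall c r := fun hmem => hm ⟨ch m, hmem, ch.left_inv hms⟩
      have hge : r ≤ ‖ch m - c‖ := by
        rw [mem_closedBall, dist_eq_norm] at hnot; linarith [not_le.1 hnot]
      have hvv : ‖v - c‖ ≤ r/2 := by
        rw [← dist_eq_norm]; exact (mem_ball.1 hv).le
      simp only [fnT']; rw [if_pos hms, fnP_of_ge hr hvv hge, ch.left_inv hms]
    · simp only [fnT']; rw [if_neg hms]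
  have hunion := ContinuousOn.union_continuousAt hS₁o hc1
    (fun x hx => hc2.continuousAt (hS₂o.mem_nhds hx))
  apply hunion.mono
  rintro ⟨v, m⟩ ⟨hv, -⟩
  by_cases hm : m ∈ ch.source
  · exact Or.inl ⟨hv, hm⟩
  · exact Or.inr ⟨hv, fun hmk => hm (hKs hmk)⟩

lemma fnT_contOn (hr : 0 < r) (hcb : closedBall c r ⊆ ch.target)
    [ProperSpace E] :
    ContinuousOn (fnT ch c r) (ball c (r / 2) ×ˢ (univ : Set M)) := by
  have hKs : ch.symm '' closedBall c r ⊆ ch.source := by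
    rintro _ ⟨x, hx, rfl⟩; exact ch.map_target (hcb hx)
  have hKc : IsClosed (ch.symm '' closedBall c r) := fnK_closed hcb
  have hS₁o : IsOpen (ball c (r/2) ×ˢ ch.source) := isOpen_ball.prod ch.open_source
  have hS₂o : IsOpen (ball c (r/2) ×ˢ (ch.symm '' closedBall c r)ᶜ) :=
    isOpen_ball.prod hKc.isOpen_compl
  have hc1 : ContinuousOn (fnT ch c r) (ball c (r/2) ×ˢ ch.source) := by
    have hg : ContinuousOn (fun p : E × M => ch.symm (fnS c r p.1 (ch p.2)))
        (ball c (r/2) ×ˢ ch.source) := by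
      apply ch.continuousOn_symm.comp
      · have hin : ContinuousOn (fun p : E × M => (p.1, ch p.2))
            (ball c (r/2) ×ˢ ch.source) :=
          continuousOn_fst.prodMk (ch.continuousOn.comp continuousOn_snd
            (fun p hp => hp.2))
        have hmaps : MapsTo (fun p : E × M => (p.1, ch p.2))
            (ball c (r/2) ×ˢ ch.source) (univ : Set (E × E)) :=
          fun p _ => mem_univ _
        exact (fnS_cont.continuousOn (s := (univ : Set (E × E)))).comp hin hmaps
      · rintro ⟨v, m⟩ ⟨hv, hm⟩
        have hvv : ‖v - c‖ ≤ r/2 := by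
          rw [← dist_eq_norm]; exact (mem_ball.1 hv).le
        exact fnS_tgt hr hcb hvv (ch.map_source hm)
    apply hg.congr
    rintro ⟨v, m⟩ ⟨hv, hm⟩
    simp only [fnT]; rw [if_pos hm]
  have hc2 : ContinuousOn (fnT ch c r)
      (ball c (r/2) ×ˢ (ch.symm '' closedBall c r)ᶜ) := by
    apply continuous_snd.continuousOn.congr
    rintro ⟨v, m⟩ ⟨hv, hm⟩
    by_cases hms : m ∈ ch.source
    · have hnot : ch m ∉ closedBall c r := fun hmem => hm ⟨ch m, hmem, ch.left_inv hms⟩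
      have hge : r ≤ ‖ch m - c‖ := by
        rw [mem_closedBall, dist_eq_norm] at hnot; linarith [not_le.1 hnot]
      simp only [fnT]; rw [if_pos hms, fnS_of_ge hr v hge, ch.left_inv hms]
    · simp only [fnT]; rw [if_neg hms]
  have hunion := ContinuousOn.union_continuousAt hS₁o hc1
    (fun x hx => hc2.continuousAt (hS₂o.mem_nhds hx))
  apply hunion.mono
  rintro ⟨v, m⟩ ⟨hv, -⟩
  by_cases hm : m ∈ ch.source
  · exact Or.inl ⟨hv, hm⟩
  · exact Or.inr ⟨hv, fun hmk => hm (hKs hmk)⟩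

end FNT

set_option maxHeartbeats 1600000 in
/-- **Fadell–Neuwirth fibration.**
Let `M` be a smooth compact connected boundaryless manifold of dimension `n ≥ 1` and
`k ≥ 1`.  The projection `p : Conf_k(M) → M`, `x ↦ x_1`, is a locally trivial
fibration: every `x₀ ∈ M` has an open neighborhood `U` with a homeomorphism
`p⁻¹(U) ≃ U × Conf_{k-1}(M \ {x₀})` over `U`. -/
theorem fadell_neuwirth_locally_trivial
    (n : ℕ) (hn : 1 ≤ n)
    (M : Type*) [TopologicalSpace M] [T2Space M]
    [ChartedSpace (EuclideanSpace ℝ (Fin n)) M]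
    [IsManifold (𝓡 n) (⊤ : ℕ∞) M]
    [CompactSpace M] [ConnectedSpace M]
    (k : ℕ) (hk : 1 ≤ k) (x₀ : M) :
    ∃ U : Set M, IsOpen U ∧ x₀ ∈ U ∧
      ∃ φ : {z : {x : Fin k → M // Function.Injective x} // z.val ⟨0, hk⟩ ∈ U} ≃ₜ
          ↥U × {y : Fin (k - 1) → {m : M // m ≠ x₀} // Function.Injective y},
        ∀ z, ((φ z).1 : M) = z.val.val ⟨0, hk⟩ := by
  classical
  set ch := chartAt (EuclideanSpace ℝ (Fin n)) x₀ with hch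
  have hx₀s : x₀ ∈ ch.source := mem_chart_source _ x₀
  set c : EuclideanSpace ℝ (Fin n) := ch x₀ with hcdef
  have hct : c ∈ ch.target := ch.map_source hx₀s
  obtain ⟨r', hr'pos, hball⟩ := Metric.isOpen_iff.1 ch.open_target c hct
  set r := r' / 2 with hrdef
  have hr : 0 < r := by positivity
  have hcb : Metric.closedBall c r ⊆ ch.target := fun x hx =>
    hball (lt_of_le_of_lt (Metric.mem_closedBall.1 hx) (by rw [hrdef]; linarith))
  set U : Set M := ch.source ∩ ch ⁻¹' Metric.ball c (r / 2) with hU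
  have hUopen : IsOpen U := ch.isOpen_inter_preimage Metric.isOpen_ball
  have hx₀U : x₀ ∈ U := ⟨hx₀s, by
    simp only [Set.mem_preimage, Metric.mem_ball, ← hcdef, dist_self]; positivity⟩
  refine ⟨U, hUopen, hx₀U, ?_⟩
  have hUs : U ⊆ ch.source := Set.inter_subset_left
  have hgood : ∀ u ∈ U, ‖ch u - c‖ ≤ r / 2 := by
    intro u hu
    have h2 := hu.2
    rw [Set.mem_preimage, Metric.mem_ball, dist_eq_norm] at h2
    exact h2.le
  have hsymm_c : ch.symm c = x₀ := ch.left_inv hx₀s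
  have hidx : ∀ i : Fin (k - 1), i.val + 1 < k := by
    intro i; have := i.isLt; omega
  have hidx' : ∀ j : Fin k, ¬(j.val = 0) → j.val - 1 < k - 1 := by
    intro j hj; have := j.isLt; omega
  -- `fnT (ch u, x₀) = u` for `u ∈ U`
  have hTx₀ : ∀ u ∈ U, fnT ch c r (ch u, x₀) = u := by
    intro u hu
    have := fnT_center (ch := ch) hr hcb (hUs hu) (hgood u hu)
    rwa [hsymm_c] at this
  have hT'u : ∀ u ∈ U, fnT' ch c r (ch u, u) = x₀ := by
    intro u hu
    have := fnT'_center (ch := ch) hr hcb (hUs hu) (hgood u hu)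
    rwa [hsymm_c] at this
  -- forward map
  let F : {z : {x : Fin k → M // Function.Injective x} // z.val ⟨0, hk⟩ ∈ U} →
      ↥U × {y : Fin (k - 1) → {m : M // m ≠ x₀} // Function.Injective y} :=
    fun z =>
      (⟨z.val.val ⟨0, hk⟩, z.prop⟩,
       ⟨fun i => ⟨fnT' ch c r (ch (z.val.val ⟨0, hk⟩), z.val.val ⟨i.val + 1, hidx i⟩), by
          intro h
          have hu : z.val.val ⟨0, hk⟩ ∈ U := z.prop
          have hgu := hgood _ hu
          have heq : fnT' ch c r (ch (z.val.val ⟨0, hk⟩), z.val.val ⟨i.val + 1, hidx i⟩)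
              = fnT' ch c r (ch (z.val.val ⟨0, hk⟩), z.val.val ⟨0, hk⟩) := by
            rw [h, hT'u _ hu]
          have h2 := fnT'_inj hr hcb hgu heq
          have h3 := z.val.prop h2
          have h4 := congrArg Fin.val h3
          simp at h4⟩, by
        intro i i' hii
        have hu : z.val.val ⟨0, hk⟩ ∈ U := z.prop
        have hgu := hgood _ hu
        have h1 := congrArg Subtype.val hii
        have h2 := fnT'_inj hr hcb hgu h1
        have h3 := z.val.prop h2
        have h4 := congrArg Fin.val h3
        exact Fin.ext (by simpa using h4)⟩)
  -- backward map
  let G : ↥U × {y : Fin (k - 1) → {m : M // m ≠ x₀} // Function.Injective y} →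
      {z : {x : Fin k → M // Function.Injective x} // z.val ⟨0, hk⟩ ∈ U} :=
    fun p =>
      ⟨⟨fun j => if hj : j.val = 0 then (p.1 : M)
          else fnT ch c r (ch (p.1 : M), (p.2.val ⟨j.val - 1, hidx' j hj⟩ : {m : M // m ≠ x₀}).val),
        by
          intro j j' hjj
          have hu : (p.1 : M) ∈ U := p.1.prop
          have hgu := hgood _ hu
          by_cases h0 : j.val = 0 <;> by_cases h0' : j'.val = 0
          · exact Fin.ext (by omega)
          · exfalso
            simp only [dif_pos h0, dif_neg h0'] at hjj
            have heq : fnT ch c r (ch (p.1 : M), x₀)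
                = fnT ch c r (ch (p.1 : M), (p.2.val ⟨j'.val - 1, hidx' j' h0'⟩).val) :=
              (hTx₀ _ hu).trans hjj
            have h2 := fnT_inj hr hcb hgu heq
            exact (p.2.val ⟨j'.val - 1, hidx' j' h0'⟩).prop h2.symm
          · exfalso
            simp only [dif_neg h0, dif_pos h0'] at hjj
            have heq : fnT ch c r (ch (p.1 : M), x₀)
                = fnT ch c r (ch (p.1 : M), (p.2.val ⟨j.val - 1, hidx' j h0⟩).val) :=
              (hTx₀ _ hu).trans hjj.symm
            have h2 := fnT_inj hr hcb hgu heq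
            exact (p.2.val ⟨j.val - 1, hidx' j h0⟩).prop h2.symm
          · simp only [dif_neg h0, dif_neg h0'] at hjj
            have h2 := fnT_inj hr hcb hgu hjj
            have h3 := p.2.prop (Subtype.ext h2)
            have h4 := congrArg Fin.val h3
            simp only at h4
            exact Fin.ext (by omega)⟩, by
        have he : (fun j : Fin k => if hj : j.val = 0 then (p.1 : M)
            else fnT ch c r (ch (p.1 : M),
              (p.2.val ⟨j.val - 1, hidx' j hj⟩ : {m : M // m ≠ x₀}).val)) ⟨0, hk⟩
            = (p.1 : M) := dif_pos rfl
        exact Set.mem_of_eq_of_mem he p.1.prop⟩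
  have hleft : Function.LeftInverse G F := by
    intro z
    apply Subtype.ext
    apply Subtype.ext
    funext j
    show (if hj : j.val = 0 then _ else _) = z.val.val j
    have hu : z.val.val ⟨0, hk⟩ ∈ U := z.prop
    have hgu := hgood _ hu
    by_cases h0 : j.val = 0
    · rw [dif_pos h0]
      have : j = ⟨0, hk⟩ := Fin.ext h0
      rw [this]
    · rw [dif_neg h0]
      have hj0 : j.val ≠ 0 := h0
      have hidxeq : (⟨j.val - 1 + 1, hidx ⟨j.val - 1, hidx' j h0⟩⟩ : Fin k) = j := by
        apply Fin.ext
        show j.val - 1 + 1 = j.val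
        omega
      show fnT ch c r (ch (z.val.val ⟨0, hk⟩),
          fnT' ch c r (ch (z.val.val ⟨0, hk⟩), z.val.val ⟨j.val - 1 + 1, _⟩)) = _
      rw [hidxeq]
      exact fnT_left hr hcb hgu _
  have hright : Function.RightInverse G F := by
    intro p
    have hu : (p.1 : M) ∈ U := p.1.prop
    have hgu := hgood _ hu
    have hz0 : (G p).val.val ⟨0, hk⟩ = (p.1 : M) := by rfl
    apply Prod.ext
    · exact Subtype.ext hz0
    · apply Subtype.ext
      funext i
      apply Subtype.ext
      show fnT' ch c r (ch ((G p).val.val ⟨0, hk⟩), (G p).val.val ⟨i.val + 1, hidx i⟩)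
          = (p.2.val i).val
      have hz1 : (G p).val.val ⟨i.val + 1, hidx i⟩
          = fnT ch c r (ch (p.1 : M),
            (p.2.val ⟨i.val + 1 - 1, hidx' ⟨i.val + 1, hidx i⟩ (Nat.succ_ne_zero _)⟩).val) := by
        rfl
      rw [hz0, hz1]
      have hieq : (⟨i.val + 1 - 1, hidx' ⟨i.val + 1, hidx i⟩ (Nat.succ_ne_zero _)⟩ : Fin (k - 1)) = i := by
        apply Fin.ext
        show i.val + 1 - 1 = i.val
        omega
      rw [hieq]
      exact fnT'_left hr hcb hgu _
  -- continuity
  have hz₀cont : Continuous fun z : {z : {x : Fin k → M // Function.Injective x} //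
      z.val ⟨0, hk⟩ ∈ U} => z.val.val ⟨0, hk⟩ :=
    (continuous_apply _).comp (continuous_subtype_val.comp continuous_subtype_val)
  have hvcont : Continuous fun z : {z : {x : Fin k → M // Function.Injective x} //
      z.val ⟨0, hk⟩ ∈ U} => ch (z.val.val ⟨0, hk⟩) :=
    ch.continuousOn.comp_continuous hz₀cont (fun z => hUs z.prop)
  have hFcont : Continuous F := by
    apply Continuous.prodMk
    · exact hz₀cont.subtype_mk _
    · apply Continuous.subtype_mk
      apply continuous_pi
      intro i
      apply Continuous.subtype_mk
      exact (fnT'_contOn hr hcb).comp_continuous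
        (hvcont.prodMk ((continuous_apply _).comp
          (continuous_subtype_val.comp continuous_subtype_val)))
        (fun z => ⟨z.prop.2, Set.mem_univ _⟩)
  have hGcont : Continuous G := by
    apply Continuous.subtype_mk
    apply Continuous.subtype_mk
    apply continuous_pi
    intro j
    by_cases h0 : j.val = 0
    · simp only [dif_pos h0]
      exact continuous_subtype_val.comp continuous_fst
    · simp only [dif_neg h0]
      exact (fnT_contOn hr hcb).comp_continuous
        ((ch.continuousOn.comp_continuous
            (continuous_subtype_val.comp continuous_fst) (fun p => hUs p.1.prop)).prodMk
          (continuous_subtype_val.comp ((continuous_apply _).comp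
            (continuous_subtype_val.comp continuous_snd))))
        (fun p => ⟨p.1.prop.2, Set.mem_univ _⟩)
  exact ⟨⟨⟨F, G, hleft, hright⟩, hFcont, hGcont⟩, fun z => rfl⟩
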